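/- Let G=(V,D) be a finite symmetric digraph with weight w and 1-form θ, with twisted Szegedy walk U = SC. Then ker(d_A) ∩ ker(d_B) = ( ran(d_A*) + ran(d_B*) )^⊥, and for every ψ ∈ ker(d_A) ∩ ker(d_B) one has U(ψ − Sψ) = ψ − Sψ and U(ψ + Sψ) = −(ψ + Sψ). -/

import Mathlib

open Finset

/-- A finite symmetric digraph: finite nonempty vertex and arc sets, origin/terminus maps,
and a fixed-point-free involutive arc reversal with `o (rev e) = t e`; every vertex has
out-degree at least one. -/
structure SymDigraph where
  V : Type
  D : Type
  [fintypeV : Fintype V]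
  [fintypeD : Fintype D]
  [decEqV : DecidableEq V]
  [decEqD : DecidableEq D]
  [nonemptyV : Nonempty V]
  o : D → V
  t : D → V
  rev : D → D
  rev_ne : ∀ e, rev e ≠ e
  rev_rev : ∀ e, rev (rev e) = e
  o_rev : ∀ e, o (rev e) = t e
  exists_arc : ∀ u : V, ∃ e : D, o e = u

attribute [instance] SymDigraph.fintypeV SymDigraph.fintypeD SymDigraph.decEqV
  SymDigraph.decEqD SymDigraph.nonemptyV

namespace SymDigraph

variable (G : SymDigraph)

/-- out-degree of a vertex -/
def deg (u : G.V) : ℕ := (univ.filter fun e => G.o e = u).card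

/-- a weight: never zero and with unit square-sum over the arcs leaving each vertex -/
def IsWeight (w : G.D → ℂ) : Prop :=
  (∀ e, w e ≠ 0) ∧
    ∀ u : G.V, ∑ e ∈ univ.filter (fun e => G.o e = u), ‖w e‖ ^ 2 = 1

/-- a 1-form: antisymmetric under arc reversal -/
def IsOneForm (θ : G.D → ℝ) : Prop := ∀ e, θ (G.rev e) = - θ e

/-- the boundary operator `d_A : ℓ²(D) → ℓ²(V)`, `(d_A φ)(v) = ∑_{e : o e = v} conj (w e) * φ e` -/
noncomputable def dA (w : G.D → ℂ) : (G.D → ℂ) →ₗ[ℂ] (G.V → ℂ) where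
  toFun φ := fun v => ∑ e ∈ univ.filter (fun e => G.o e = v), (starRingEnd ℂ) (w e) * φ e
  map_add' φ ψ := by
    funext v
    simp [mul_add, Finset.sum_add_distrib]
  map_smul' c φ := by
    funext v
    simp only [Pi.smul_apply, smul_eq_mul, RingHom.id_apply, Finset.mul_sum]
    exact Finset.sum_congr rfl fun e _ => by ring

/-- the boundary operator `d_B`, `(d_B φ)(v) = ∑_{e : o e = v} conj (w e) e^{-iθ(e)} φ(ē)` -/
noncomputable def dB (w : G.D → ℂ) (θ : G.D → ℝ) : (G.D → ℂ) →ₗ[ℂ] (G.V → ℂ) where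
  toFun φ := fun v => ∑ e ∈ univ.filter (fun e => G.o e = v),
      (starRingEnd ℂ) (w e) * Complex.exp (-(θ e : ℂ) * Complex.I) * φ (G.rev e)
  map_add' φ ψ := by
    funext v
    simp [mul_add, Finset.sum_add_distrib]
  map_smul' c φ := by
    funext v
    simp only [Pi.smul_apply, smul_eq_mul, RingHom.id_apply, Finset.mul_sum]
    exact Finset.sum_congr rfl fun e _ => by ring

/-- the coboundary operator `d_A* : ℓ²(V) → ℓ²(D)`, `(d_A* f)(e) = w e * f (o e)` -/
noncomputable def dAadj (w : G.D → ℂ) : (G.V → ℂ) →ₗ[ℂ] (G.D → ℂ) where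
  toFun f := fun e => w e * f (G.o e)
  map_add' f g := by funext e; simp [mul_add]
  map_smul' c f := by funext e; simp only [Pi.smul_apply, smul_eq_mul, RingHom.id_apply]; ring

/-- the coboundary operator `d_B*`, `(d_B* f)(e) = e^{-iθ(e)} w(ē) f (t e)` -/
noncomputable def dBadj (w : G.D → ℂ) (θ : G.D → ℝ) : (G.V → ℂ) →ₗ[ℂ] (G.D → ℂ) where
  toFun f := fun e => Complex.exp (-(θ e : ℂ) * Complex.I) * w (G.rev e) * f (G.t e)
  map_add' f g := by funext e; simp [mul_add]
  map_smul' c f := by funext e; simp only [Pi.smul_apply, smul_eq_mul, RingHom.id_apply]; ring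

/-- the twisted shift `S`, `(Sφ)(e) = e^{-iθ(e)} φ(ē)` -/
noncomputable def shiftS (θ : G.D → ℝ) : (G.D → ℂ) →ₗ[ℂ] (G.D → ℂ) where
  toFun φ := fun e => Complex.exp (-(θ e : ℂ) * Complex.I) * φ (G.rev e)
  map_add' φ ψ := by funext e; simp [mul_add]
  map_smul' c φ := by funext e; simp only [Pi.smul_apply, smul_eq_mul, RingHom.id_apply]; ring

/-- the coin operator `C = 2 d_A* d_A - I` -/
noncomputable def coinC (w : G.D → ℂ) : (G.D → ℂ) →ₗ[ℂ] (G.D → ℂ) :=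
  (2 : ℂ) • (G.dAadj w ∘ₗ G.dA w) - LinearMap.id

/-- the twisted Szegedy walk `U = S C` -/
noncomputable def walkU (w : G.D → ℂ) (θ : G.D → ℝ) : (G.D → ℂ) →ₗ[ℂ] (G.D → ℂ) :=
  G.shiftS θ ∘ₗ G.coinC w

/-- the discriminant operator `T = d_A d_B*` -/
noncomputable def discT (w : G.D → ℂ) (θ : G.D → ℝ) : (G.V → ℂ) →ₗ[ℂ] (G.V → ℂ) :=
  G.dA w ∘ₗ G.dBadj w θ

/-- the standard Hermitian inner product on `ℓ²(D)` -/
noncomputable def innD (φ ψ : G.D → ℂ) : ℂ := ∑ e, (starRingEnd ℂ) (φ e) * ψ e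

/-- the standard Hermitian inner product on `ℓ²(V)` -/
noncomputable def innV (f g : G.V → ℂ) : ℂ := ∑ v, (starRingEnd ℂ) (f v) * g v

end SymDigraph

namespace SymDigraph

variable (G : SymDigraph)

-- ψ ↦ ∑ e, F e with grouping
lemma sum_group (F : G.D → ℂ) :
    ∑ v : G.V, ∑ e ∈ univ.filter (fun e => G.o e = v), F e = ∑ e, F e :=
  Finset.sum_fiberwise _ _ _

lemma sum_rev (F : G.D → ℂ) : ∑ e, F (G.rev e) = ∑ e, F e :=
  Fintype.sum_bijective G.rev (Function.Involutive.bijective G.rev_rev) _ _ (fun _ => rfl)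

lemma adjA (w : G.D → ℂ) (f : G.V → ℂ) (ψ : G.D → ℂ) :
    G.innD (G.dAadj w f) ψ = G.innV f (G.dA w ψ) := by
  unfold innD innV dAadj dA
  simp only [LinearMap.coe_mk, AddHom.coe_mk]
  rw [← sum_group]
  refine Finset.sum_congr rfl fun v _ => ?_
  rw [Finset.mul_sum]
  refine Finset.sum_congr rfl fun e he => ?_
  simp only [mem_filter, mem_univ, true_and] at he
  rw [he]
  simp [map_mul]
  ring

lemma adjB (w : G.D → ℂ) (θ : G.D → ℝ) (hθ : G.IsOneForm θ) (f : G.V → ℂ) (ψ : G.D → ℂ) :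
    G.innD (G.dBadj w θ f) ψ = G.innV f (G.dB w θ ψ) := by
  unfold innD innV dBadj dB
  simp only [LinearMap.coe_mk, AddHom.coe_mk, Finset.mul_sum]
  have h1 : ∀ v : G.V, ∑ e ∈ univ.filter (fun e => G.o e = v),
      (starRingEnd ℂ) (f v) *
        ((starRingEnd ℂ) (w e) * Complex.exp (-(θ e : ℂ) * Complex.I) * ψ (G.rev e))
      = ∑ e ∈ univ.filter (fun e => G.o e = v),
      (starRingEnd ℂ) (f (G.o e)) *
        ((starRingEnd ℂ) (w e) * Complex.exp (-(θ e : ℂ) * Complex.I) * ψ (G.rev e)) := by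
    intro v
    refine Finset.sum_congr rfl fun e he => ?_
    simp only [mem_filter, mem_univ, true_and] at he
    rw [he]
  rw [Finset.sum_congr rfl (fun v _ => h1 v), sum_group,
    ← sum_rev (F := fun e => (starRingEnd ℂ) (f (G.o e)) *
      ((starRingEnd ℂ) (w e) * Complex.exp (-(θ e : ℂ) * Complex.I) * ψ (G.rev e)))]
  refine Finset.sum_congr rfl fun e _ => ?_
  rw [G.rev_rev, hθ e, G.o_rev]
  simp only [map_mul, ← Complex.exp_conj, map_neg, Complex.conj_ofReal,
    Complex.conj_I, Complex.ofReal_neg]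
  push_cast
  ring_nf

lemma innV_self_eq_zero {f : G.V → ℂ} (h : G.innV f f = 0) : f = 0 := by
  unfold innV at h
  have h' : ∑ v, Complex.normSq (f v) = 0 := by
    have := congrArg Complex.re h
    simpa [Complex.mul_conj', Complex.mul_conj, Complex.normSq_apply] using this
  funext v
  have := (Finset.sum_eq_zero_iff_of_nonneg
    (fun v _ => Complex.normSq_nonneg (f v))).mp h' v (mem_univ v)
  simpa [Complex.normSq_eq_zero] using this

lemma dA_shiftS (w : G.D → ℂ) (θ : G.D → ℝ) (ψ : G.D → ℂ) :
    G.dA w (G.shiftS θ ψ) = G.dB w θ ψ := by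
  unfold dA dB shiftS
  simp only [LinearMap.coe_mk, AddHom.coe_mk]
  funext v
  refine Finset.sum_congr rfl fun e _ => ?_
  ring

lemma shiftS_shiftS (θ : G.D → ℝ) (hθ : G.IsOneForm θ) (ψ : G.D → ℂ) :
    G.shiftS θ (G.shiftS θ ψ) = ψ := by
  unfold shiftS
  simp only [LinearMap.coe_mk, AddHom.coe_mk]
  funext e
  rw [G.rev_rev, hθ e, ← mul_assoc, ← Complex.exp_add]
  push_cast
  ring_nf
  simp

end SymDigraph


/-- `ker d_A ∩ ker d_B` is exactly the orthogonal complement of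
`L = ran d_A* + ran d_B*`, and for every `ψ ∈ ker d_A ∩ ker d_B` one has
`U(ψ − Sψ) = ψ − Sψ` and `U(ψ + Sψ) = −(ψ + Sψ)`. -/
theorem kernel_intersection_orthocomplement (G : SymDigraph) (w : G.D → ℂ) (θ : G.D → ℝ)
    (hw : G.IsWeight w) (hθ : G.IsOneForm θ) :
    (∀ ψ : G.D → ℂ,
      (G.dA w ψ = 0 ∧ G.dB w θ ψ = 0) ↔
        ∀ χ ∈ LinearMap.range (G.dAadj w) ⊔ LinearMap.range (G.dBadj w θ),
          G.innD χ ψ = 0) ∧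
    (∀ ψ : G.D → ℂ, G.dA w ψ = 0 → G.dB w θ ψ = 0 →
      G.walkU w θ (ψ - G.shiftS θ ψ) = ψ - G.shiftS θ ψ ∧
      G.walkU w θ (ψ + G.shiftS θ ψ) = -(ψ + G.shiftS θ ψ)) := by
  have innD_add : ∀ χ₁ χ₂ ψ : G.D → ℂ, G.innD (χ₁ + χ₂) ψ = G.innD χ₁ ψ + G.innD χ₂ ψ := by
    intro χ₁ χ₂ ψ
    unfold SymDigraph.innD
    rw [← Finset.sum_add_distrib]
    refine Finset.sum_congr rfl fun e _ => ?_
    simp [add_mul]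
  constructor
  · intro ψ
    constructor
    · rintro ⟨hA, hB⟩ χ hχ
      rw [Submodule.mem_sup] at hχ
      obtain ⟨y, ⟨f, rfl⟩, z, ⟨g, rfl⟩, rfl⟩ := hχ
      rw [innD_add, G.adjA w f ψ, G.adjB w θ hθ g ψ, hA, hB]
      simp [SymDigraph.innV]
    · intro h
      constructor
      · apply G.innV_self_eq_zero
        rw [← G.adjA w (G.dA w ψ) ψ]
        exact h _ (Submodule.mem_sup_left ⟨_, rfl⟩)
      · apply G.innV_self_eq_zero
        rw [← G.adjB w θ hθ (G.dB w θ ψ) ψ]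
        exact h _ (Submodule.mem_sup_right ⟨_, rfl⟩)
  · intro ψ hA hB
    have hCψ : G.coinC w ψ = -ψ := by
      unfold SymDigraph.coinC
      simp [hA]
    have hAS : G.dA w (G.shiftS θ ψ) = 0 := by rw [G.dA_shiftS w θ ψ]; exact hB
    have hCS : G.coinC w (G.shiftS θ ψ) = -(G.shiftS θ ψ) := by
      unfold SymDigraph.coinC
      simp [hAS]
    have hSS := G.shiftS_shiftS θ hθ ψ
    constructor
    · show G.shiftS θ (G.coinC w (ψ - G.shiftS θ ψ)) = _
      rw [map_sub, hCψ, hCS, map_sub, map_neg, map_neg, hSS]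
      abel
    · show G.shiftS θ (G.coinC w (ψ + G.shiftS θ ψ)) = _
      rw [map_add, hCψ, hCS, map_add, map_neg, map_neg, hSS]
      abel
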